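/- In the setting of the previous structure theorem (equicontractive homothetic IFS with weak separation, maximal neighbourhood 𝒩₀, word 𝚋₀ and family 𝓕 ⊆ 𝒩₀ as in Claim on 𝚋₀), let 𝚒 ∈ Γ^ℕ and k ∈ ℕ be such that σ^{k−|𝚊₀𝚋₀|} 𝚒 ∈ [𝚊₀𝚋₀], and set k' = k − |𝚋₀|. Then for each f ∈ 𝒩₀, the set { 𝚊 ∈ Γ^k : φ_𝚊 = φ_{𝚒|_k} ∘ f } equals the disjoint union over h ∈ 𝓕 of the sets { 𝚋𝚌 : 𝚋 ∈ Γ^{k'}, 𝚌 ∈ Γ^{|𝚋₀|}, φ_𝚋 = φ_{𝚒|_{k'}} ∘ h, h ∘ φ_𝚌 = φ_{𝚋₀} ∘ f }; in particular the choices of 𝚋 and 𝚌 are independent. -/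

import Mathlib

open Metric

/-- Composition `φ_𝚊` along a finite word. -/
def wordMap {Γ α : Type*} (φ : Γ → α → α) : List Γ → α → α
  | [] => id
  | i :: a => φ i ∘ wordMap φ a

/-- The first `k` letters of an infinite word. -/
def wordOf {Γ : Type*} (i : ℕ → Γ) (k : ℕ) : List Γ := List.ofFn (fun j : Fin k => i j)

/-- The left shift on `Γ^ℕ`. -/
def shift {Γ : Type*} (i : ℕ → Γ) : ℕ → Γ := fun n => i (n + 1)

/-- Equicontractive neighbourhood system. -/
def nbhdE {Γ : Type*} {d : ℕ}
    (φ : Γ → EuclideanSpace ℝ (Fin d) → EuclideanSpace ℝ (Fin d))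
    (K : Set (EuclideanSpace ℝ (Fin d))) (a : List Γ) :
    Set (EuclideanSpace ℝ (Fin d) → EuclideanSpace ℝ (Fin d)) :=
  {f | ∃ b : List Γ, b.length = a.length ∧
    (wordMap φ b '' K ∩ wordMap φ a '' closedBall 0 1).Nonempty ∧
    wordMap φ a ∘ f = wordMap φ b}

lemma wordMap_append {Γ α : Type*} (φ : Γ → α → α) (u v : List Γ) :
    wordMap φ (u ++ v) = wordMap φ u ∘ wordMap φ v := by
  induction u with
  | nil => rfl
  | cons x u ih =>
    show φ x ∘ wordMap φ (u ++ v) = (φ x ∘ wordMap φ u) ∘ wordMap φ v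
    rw [ih, Function.comp_assoc]

lemma wordOf_length {Γ : Type*} (i : ℕ → Γ) (n : ℕ) : (wordOf i n).length = n := by
  simp [wordOf]

lemma shift_iterate {Γ : Type*} (i : ℕ → Γ) (n : ℕ) : shift^[n] i = fun j => i (j + n) := by
  induction n with
  | zero => simp
  | succ n ih =>
    rw [Function.iterate_succ_apply', ih]
    funext j
    show i (j + 1 + n) = i (j + (n + 1))
    congr 1; omega

lemma wordOf_add {Γ : Type*} (i : ℕ → Γ) (n p : ℕ) :
    wordOf i (n + p) = wordOf i n ++ wordOf (shift^[n] i) p := by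
  unfold wordOf
  rw [List.ofFn_add]
  congr 1
  have : (fun j : Fin p => i (Fin.natAdd n j)) = fun j : Fin p => shift^[n] i j := by
    funext j
    rw [shift_iterate]
    show i (n + j) = i (j + n)
    congr 1; omega
  rw [this]

lemma wordOf_take {Γ : Type*} (i : ℕ → Γ) {p q : ℕ} (h : p ≤ q) :
    (wordOf i q).take p = wordOf i p := by
  apply List.ext_getElem
  · simp [wordOf]; omega
  · intro j h1 h2
    simp [wordOf]

section Geo
variable {Γ : Type*} {d : ℕ} {ρ : ℝ} {a : Γ → EuclideanSpace ℝ (Fin d)}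
  {φ : Γ → EuclideanSpace ℝ (Fin d) → EuclideanSpace ℝ (Fin d)}
  {K : Set (EuclideanSpace ℝ (Fin d))}

lemma wordMap_affine (hφ : ∀ i x, φ i x = ρ • x + a i) (w : List Γ) :
    ∃ t, ∀ x, wordMap φ w x = ρ ^ w.length • x + t := by
  induction w with
  | nil => exact ⟨0, fun x => by simp [wordMap]⟩
  | cons j w ih =>
    obtain ⟨t, ht⟩ := ih
    refine ⟨ρ • t + a j, fun x => ?_⟩
    show φ j (wordMap φ w x) = _
    rw [hφ, ht, List.length_cons, smul_add, smul_smul, pow_succ, mul_comm, add_assoc]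

lemma wordMap_bijective (hρ0 : 0 < ρ) (hφ : ∀ i x, φ i x = ρ • x + a i) (w : List Γ) :
    Function.Bijective (wordMap φ w) := by
  obtain ⟨t, ht⟩ := wordMap_affine hφ w
  have hc : (ρ ^ w.length) ≠ 0 := by positivity
  constructor
  · intro x y hxy
    rw [ht, ht] at hxy
    have h2 : ρ ^ w.length • x = ρ ^ w.length • y := by
      have := add_right_cancel hxy
      exact this
    calc x = (ρ ^ w.length)⁻¹ • ρ ^ w.length • x := (inv_smul_smul₀ hc x).symm
    _ = (ρ ^ w.length)⁻¹ • ρ ^ w.length • y := by rw [h2]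
    _ = y := inv_smul_smul₀ hc y
  · intro y
    refine ⟨(ρ ^ w.length)⁻¹ • (y - t), ?_⟩
    rw [ht, smul_inv_smul₀ hc, sub_add_cancel]

lemma wordMap_mapsK (hattr : K = ⋃ i, φ i '' K) (w : List Γ) :
    wordMap φ w '' K ⊆ K := by
  induction w with
  | nil => simp [wordMap]
  | cons j w ih =>
    have h1 : φ j '' K ⊆ K := (Set.subset_iUnion (fun i => φ i '' K) j).trans hattr.ge
    calc wordMap φ (j :: w) '' K = φ j '' (wordMap φ w '' K) := by
          show (φ j ∘ wordMap φ w) '' K = _; rw [Set.image_comp]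
    _ ⊆ φ j '' K := Set.image_mono ih
    _ ⊆ K := h1

lemma norm_a_le (hρ : ρ ∈ Set.Ioo (0:ℝ) 1) (hφ : ∀ i x, φ i x = ρ • x + a i)
    (hKc : IsCompact K) (hKne : K.Nonempty) (hattr : K = ⋃ i, φ i '' K)
    (hKball : K ⊆ ball 0 1) (j : Γ) : ‖a j‖ ≤ 1 - ρ := by
  obtain ⟨x, hx⟩ := hKne
  have h1ρ : (1:ℝ) - ρ ≠ 0 := by have := hρ.2; intro h; nlinarith
  set p : EuclideanSpace ℝ (Fin d) := (1 - ρ)⁻¹ • a j with hp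
  have hfix : φ j p = p := by
    rw [hφ, hp, smul_smul]
    have h2 : ρ * (1 - ρ)⁻¹ + 1 = (1 - ρ)⁻¹ := by field_simp; ring
    calc (ρ * (1-ρ)⁻¹) • a j + a j = (ρ * (1-ρ)⁻¹ + 1) • a j := by
          rw [add_smul, one_smul]
    _ = (1-ρ)⁻¹ • a j := by rw [h2]
  have hdist : ∀ u v, dist (φ j u) (φ j v) = ρ * dist u v := by
    intro u v
    rw [hφ, hφ, dist_eq_norm, dist_eq_norm]
    have h3 : (ρ • u + a j) - (ρ • v + a j) = ρ • (u - v) := by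
      rw [smul_sub]; abel
    rw [h3, norm_smul, Real.norm_eq_abs, abs_of_pos hρ.1]
  have hiter : ∀ n, dist ((φ j)^[n] x) p = ρ ^ n * dist x p ∧ (φ j)^[n] x ∈ K := by
    intro n; induction n with
    | zero => simpa using hx
    | succ n ih =>
      refine ⟨?_, ?_⟩
      · rw [Function.iterate_succ_apply']
        calc dist (φ j ((φ j)^[n] x)) p = dist (φ j ((φ j)^[n] x)) (φ j p) := by rw [hfix]
        _ = ρ * dist ((φ j)^[n] x) p := hdist _ _
        _ = ρ ^ (n+1) * dist x p := by rw [ih.1]; ring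
      · rw [Function.iterate_succ_apply']
        exact ((Set.subset_iUnion (fun i => φ i '' K) j).trans hattr.ge) ⟨_, ih.2, rfl⟩
  have htend : Filter.Tendsto (fun n => (φ j)^[n] x) Filter.atTop (nhds p) := by
    rw [tendsto_iff_dist_tendsto_zero]
    have heq : (fun n => dist ((φ j)^[n] x) p) = fun n => ρ ^ n * dist x p := by
      funext n; exact (hiter n).1
    rw [heq]
    have := tendsto_pow_atTop_nhds_zero_of_lt_one hρ.1.le hρ.2
    simpa using this.mul_const (dist x p)
  have hpK : p ∈ K := hKc.isClosed.mem_of_tendsto htend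
    (Filter.Eventually.of_forall fun n => (hiter n).2)
  have hpball : ‖p‖ < 1 := by
    have := hKball hpK; rwa [mem_ball, dist_zero_right] at this
  have ha : a j = (1-ρ) • p := by rw [hp, smul_inv_smul₀ h1ρ]
  rw [ha, norm_smul, Real.norm_eq_abs, abs_of_pos (by nlinarith [hρ.2] : (0:ℝ) < 1-ρ)]
  nlinarith [norm_nonneg p, hρ.2]

lemma wordMap_cball (hρ : ρ ∈ Set.Ioo (0:ℝ) 1) (hφ : ∀ i x, φ i x = ρ • x + a i)
    (hKc : IsCompact K) (hKne : K.Nonempty) (hattr : K = ⋃ i, φ i '' K)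
    (hKball : K ⊆ ball 0 1) (w : List Γ) :
    wordMap φ w '' closedBall 0 1 ⊆ closedBall 0 1 := by
  induction w with
  | nil => simp [wordMap]
  | cons j w ih =>
    have h1 : φ j '' closedBall 0 1 ⊆ closedBall 0 1 := by
      rintro _ ⟨x, hx, rfl⟩
      rw [mem_closedBall_zero_iff] at hx ⊢
      rw [hφ]
      have hna := norm_a_le hρ hφ hKc hKne hattr hKball j
      calc ‖ρ • x + a j‖ ≤ ‖ρ • x‖ + ‖a j‖ := norm_add_le _ _
      _ ≤ ρ * 1 + (1 - ρ) := by
          rw [norm_smul, Real.norm_eq_abs, abs_of_pos hρ.1]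
          have : ρ * ‖x‖ ≤ ρ * 1 := by nlinarith [hρ.1]
          linarith
      _ = 1 := by ring
    calc wordMap φ (j :: w) '' closedBall 0 1
        = φ j '' (wordMap φ w '' closedBall 0 1) := by
          show (φ j ∘ wordMap φ w) '' _ = _; rw [Set.image_comp]
    _ ⊆ φ j '' closedBall 0 1 := Set.image_mono ih
    _ ⊆ closedBall 0 1 := h1

lemma nbhdE_mono (u w : List Γ) : nbhdE φ K w ⊆ nbhdE φ K (u ++ w) := by
  rintro f ⟨b, hlen, ⟨x, hx1, hx2⟩, hcomp⟩
  refine ⟨u ++ b, by simp [hlen], ⟨wordMap φ u x, ?_, ?_⟩, ?_⟩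
  · rw [wordMap_append, Set.image_comp]; exact ⟨x, hx1, rfl⟩
  · rw [wordMap_append, Set.image_comp]; exact ⟨x, hx2, rfl⟩
  · rw [wordMap_append φ u w, Function.comp_assoc, hcomp, ← wordMap_append]

end Geo

/-- **Partition of exact overlaps.** In the setting of the structure theorem for the
maximal neighbourhood system (`𝚋₀`, `𝓕 ⊆ 𝒩₀`), if `𝚒|_k` ends with `𝚊₀𝚋₀` and
`k' = k − |𝚋₀|`, then for each `f ∈ 𝒩₀` the set `{𝚊 ∈ Γ^k : φ_𝚊 = φ_{𝚒|_k} ∘ f}`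
is the disjoint union over `h ∈ 𝓕` of
`{𝚋𝚌 : 𝚋 ∈ Γ^{k'}, 𝚌 ∈ Γ^{|𝚋₀|}, φ_𝚋 = φ_{𝚒|_{k'}} ∘ h, h ∘ φ_𝚌 = φ_{𝚋₀} ∘ f}`. -/
theorem stmt11 {Γ : Type*} [Fintype Γ] [Nonempty Γ] {d : ℕ}
    (ρ : ℝ) (hρ : ρ ∈ Set.Ioo (0 : ℝ) 1) (a : Γ → EuclideanSpace ℝ (Fin d))
    (φ : Γ → EuclideanSpace ℝ (Fin d) → EuclideanSpace ℝ (Fin d))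
    (hφ : ∀ i x, φ i x = ρ • x + a i)
    (K : Set (EuclideanSpace ℝ (Fin d))) (hKc : IsCompact K) (hKne : K.Nonempty)
    (hattr : K = ⋃ i, φ i '' K) (hKball : K ⊆ ball 0 1)
    (hfin : ∀ w : List Γ, (nbhdE φ K w).Finite)
    (a₀ : List Γ) (hmax : ∀ w : List Γ, (nbhdE φ K w).ncard ≤ (nbhdE φ K a₀).ncard)
    (b₀ : List Γ) (F : Set (EuclideanSpace ℝ (Fin d) → EuclideanSpace ℝ (Fin d)))
    (hF : F ⊆ nbhdE φ K a₀) (hb₀ : nbhdE φ K b₀ = nbhdE φ K a₀)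
    (hdesc : ∀ h ∈ F, ∃ bh : List Γ,
      h ∘ wordMap φ bh = wordMap φ b₀ ∧ nbhdE φ K bh = nbhdE φ K a₀)
    (hmiss : ∀ h ∈ nbhdE φ K a₀ \ F,
      wordMap φ b₀ '' closedBall 0 1 ∩ h '' K = ∅)
    (i : ℕ → Γ) (k : ℕ) (hk : (a₀ ++ b₀).length ≤ k)
    (hcyl : wordOf (shift^[k - (a₀ ++ b₀).length] i) ((a₀ ++ b₀).length) = a₀ ++ b₀) :
    ∀ f ∈ nbhdE φ K a₀,
      ({w : List Γ | w.length = k ∧ wordMap φ w = wordMap φ (wordOf i k) ∘ f} =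
        ⋃ h ∈ F, {w : List Γ | ∃ b c : List Γ, w = b ++ c ∧
          b.length = k - b₀.length ∧ c.length = b₀.length ∧
          wordMap φ b = wordMap φ (wordOf i (k - b₀.length)) ∘ h ∧
          h ∘ wordMap φ c = wordMap φ b₀ ∘ f}) ∧
      (∀ h₁ ∈ F, ∀ h₂ ∈ F, h₁ ≠ h₂ →
        Disjoint
          {w : List Γ | ∃ b c : List Γ, w = b ++ c ∧
            b.length = k - b₀.length ∧ c.length = b₀.length ∧
            wordMap φ b = wordMap φ (wordOf i (k - b₀.length)) ∘ h₁ ∧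
            h₁ ∘ wordMap φ c = wordMap φ b₀ ∘ f}
          {w : List Γ | ∃ b c : List Γ, w = b ++ c ∧
            b.length = k - b₀.length ∧ c.length = b₀.length ∧
            wordMap φ b = wordMap φ (wordOf i (k - b₀.length)) ∘ h₂ ∧
            h₂ ∘ wordMap φ c = wordMap φ b₀ ∘ f}) := by
  classical
  have hm' : (a₀ ++ b₀).length = a₀.length + b₀.length := by simp
  set m := (a₀ ++ b₀).length with hm
  set k' := k - b₀.length with hkdef
  have E1 : wordOf i ((k - m) + m) = wordOf i (k - m) ++ (a₀ ++ b₀) := by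
    rw [wordOf_add, hcyl]
  rw [show (k - m) + m = k from by omega] at E1
  have hta : wordOf (shift^[k - m] i) a₀.length = a₀ := by
    have ht := wordOf_take (shift^[k - m] i) (show a₀.length ≤ m by omega)
    rw [hcyl, List.take_left] at ht
    exact ht.symm
  have E2 : wordOf i ((k - m) + a₀.length) = wordOf i (k - m) ++ a₀ := by
    rw [wordOf_add, hta]
  rw [show (k - m) + a₀.length = k' from by omega] at E2
  have E3 : wordOf i k = wordOf i k' ++ b₀ := by
    rw [E1, E2, List.append_assoc]
  set ψ := wordMap φ (wordOf i k') with hψ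
  have hψbij : Function.Bijective ψ := wordMap_bijective hρ.1 hφ _
  obtain ⟨g, hg1, hg2⟩ := Function.bijective_iff_has_inverse.mp hψbij
  have hNk' : nbhdE φ K (wordOf i k') = nbhdE φ K a₀ := by
    have hsub : nbhdE φ K a₀ ⊆ nbhdE φ K (wordOf i k') := by
      rw [E2]; exact nbhdE_mono _ _
    exact (Set.eq_of_subset_of_ncard_le hsub (hmax _) (hfin _)).symm
  intro f hf
  obtain ⟨x₀, hx₀K, hfx₀⟩ : ∃ x₀ ∈ K, f x₀ ∈ closedBall 0 1 := by
    obtain ⟨bf, hbfl, ⟨y, hy1, hy2⟩, hbfc⟩ := hf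
    obtain ⟨u, huK, hu⟩ := hy1
    obtain ⟨z, hz, hz2⟩ := hy2
    refine ⟨u, huK, ?_⟩
    have heq : wordMap φ a₀ (f u) = wordMap φ a₀ z := by
      have h1 : wordMap φ a₀ (f u) = wordMap φ bf u := congrFun hbfc u
      rw [h1, hu, hz2]
    have := (wordMap_bijective hρ.1 hφ a₀).injective heq
    rwa [this]
  constructor
  · ext w
    simp only [Set.mem_setOf_eq, Set.mem_iUnion]
    constructor
    · rintro ⟨hwl, hwc⟩
      set b := w.take k' with hbdef
      set c := w.drop k' with hcdef
      have hbc : w = b ++ c := (List.take_append_drop k' w).symm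
      have hbl : b.length = k' := by
        rw [hbdef, List.length_take, hwl]; omega
      have hcl : c.length = b₀.length := by
        rw [hcdef, List.length_drop, hwl]; omega
      set h : EuclideanSpace ℝ (Fin d) → EuclideanSpace ℝ (Fin d) :=
        g ∘ wordMap φ b with hhdef
      have hψh : ψ ∘ h = wordMap φ b := by
        funext x; exact hg2 (wordMap φ b x)
      have hsplit : wordMap φ b ∘ wordMap φ c = ψ ∘ (wordMap φ b₀ ∘ f) := by
        rw [← wordMap_append, ← hbc, hwc, E3, wordMap_append, Function.comp_assoc]
      have hhc : h ∘ wordMap φ c = wordMap φ b₀ ∘ f := by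
        funext x
        have hx := congrFun hsplit x
        simp only [Function.comp_apply] at hx ⊢
        rw [hhdef]
        simp only [Function.comp_apply]
        rw [hx, hg1]
      have hcx₀ : wordMap φ c x₀ ∈ K := wordMap_mapsK hattr c ⟨x₀, hx₀K, rfl⟩
      have hhcx : h (wordMap φ c x₀) = wordMap φ b₀ (f x₀) := congrFun hhc x₀
      have hball : h (wordMap φ c x₀) ∈ closedBall 0 1 := by
        rw [hhcx]
        exact wordMap_cball hρ hφ hKc hKne hattr hKball b₀ ⟨f x₀, hfx₀, rfl⟩
      have hhN : h ∈ nbhdE φ K (wordOf i k') := by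
        refine ⟨b, by rw [hbl, wordOf_length], ⟨ψ (h (wordMap φ c x₀)), ?_, ?_⟩, hψh⟩
        · refine ⟨wordMap φ c x₀, hcx₀, ?_⟩
          exact (congrFun hψh (wordMap φ c x₀)).symm
        · exact ⟨h (wordMap φ c x₀), hball, rfl⟩
      rw [hNk'] at hhN
      have hhF : h ∈ F := by
        by_contra hhF
        have hempty := hmiss h ⟨hhN, hhF⟩
        exact Set.eq_empty_iff_forall_notMem.mp hempty (wordMap φ b₀ (f x₀))
          ⟨⟨f x₀, hfx₀, rfl⟩, ⟨wordMap φ c x₀, hcx₀, hhcx⟩⟩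
      exact ⟨h, hhF, b, c, hbc, hbl, hcl, hψh.symm, hhc⟩
    · rintro ⟨h, hhF, b, c, rfl, hbl, hcl, hb, hc⟩
      refine ⟨by simp only [List.length_append, hbl, hcl]; omega, ?_⟩
      rw [wordMap_append, hb, Function.comp_assoc, hc, ← Function.comp_assoc,
        ← wordMap_append, ← E3]
  · intro h₁ h1F h₂ h2F hne
    rw [Set.disjoint_left]
    rintro w ⟨b₁, c₁, hw1, hbl1, -, hb1, -⟩ ⟨b₂, c₂, hw2, hbl2, -, hb2, -⟩
    have hbb : b₁ = b₂ := (List.append_inj (hw1 ▸ hw2) (hbl1.trans hbl2.symm)).1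
    apply hne
    funext x
    apply hψbij.injective
    exact congrFun (hb1.symm.trans (hbb ▸ hb2)) x
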